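/- For all real numbers α, β ≥ 0 and 1 < p ≤ 2, setting γ_p(α,β) = pα(α−β) − α^{2−p}(α^p − β^p), one has (p−1)(α−β)^2 ≤ γ_p(α,β) + γ_p(β,α) ≤ p(α−β)^2. -/
import Mathlib


/-- For all reals `a, b ≥ 0` and `1 < p ≤ 2`, with
`γ_p(a,b) = p·a·(a-b) - a^(2-p)·(a^p - b^p)`, one has
`(p-1)(a-b)^2 ≤ γ_p(a,b) + γ_p(b,a) ≤ p(a-b)^2`. -/
theorem stmt11 (p a b : ℝ) (hp1 : 1 < p) (hp2 : p ≤ 2) (ha : 0 ≤ a) (hb : 0 ≤ b) :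
    (p - 1) * (a - b) ^ 2 ≤
        (p * a * (a - b) - a ^ (2 - p) * (a ^ p - b ^ p)) +
          (p * b * (b - a) - b ^ (2 - p) * (b ^ p - a ^ p)) ∧
      (p * a * (a - b) - a ^ (2 - p) * (a ^ p - b ^ p)) +
          (p * b * (b - a) - b ^ (2 - p) * (b ^ p - a ^ p)) ≤
        p * (a - b) ^ 2 := by
  have hp0 : (0:ℝ) ≤ p := by linarith
  have h2p : (0:ℝ) ≤ 2 - p := by linarith
  have ha2 : a ^ (2 - p) * a ^ p = a ^ (2:ℕ) := by
    rw [← Real.rpow_add' ha (by norm_num), show (2 - p) + p = ((2:ℕ):ℝ) by push_cast; ring,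
      Real.rpow_natCast]
  have hb2 : b ^ (2 - p) * b ^ p = b ^ (2:ℕ) := by
    rw [← Real.rpow_add' hb (by norm_num), show (2 - p) + p = ((2:ℕ):ℝ) by push_cast; ring,
      Real.rpow_natCast]
  set A := a ^ p * b ^ (2 - p) with hA
  set B := a ^ (2 - p) * b ^ p with hB
  have hA0 : 0 ≤ A := mul_nonneg (Real.rpow_nonneg ha p) (Real.rpow_nonneg hb _)
  have hB0 : 0 ≤ B := mul_nonneg (Real.rpow_nonneg ha _) (Real.rpow_nonneg hb p)
  have hABprod : A * B = (a * b) ^ (2:ℕ) := by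
    have : A * B = (a ^ (2 - p) * a ^ p) * (b ^ (2 - p) * b ^ p) := by ring
    rw [this, ha2, hb2]; ring
  have hsqrt : Real.sqrt A * Real.sqrt B = a * b := by
    rw [← Real.sqrt_mul hA0, hABprod, Real.sqrt_sq (mul_nonneg ha hb)]
  have key : 2 * (a * b) ≤ A + B := by
    nlinarith [sq_nonneg (Real.sqrt A - Real.sqrt B), Real.sq_sqrt hA0, Real.sq_sqrt hB0]
  have hQ : 0 ≤ (a ^ p - b ^ p) * (a ^ (2 - p) - b ^ (2 - p)) := by
    rcases le_total a b with h | h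
    · have h1 : a ^ p ≤ b ^ p := Real.rpow_le_rpow ha h hp0
      have h2 : a ^ (2 - p) ≤ b ^ (2 - p) := Real.rpow_le_rpow ha h h2p
      nlinarith
    · have h1 : b ^ p ≤ a ^ p := Real.rpow_le_rpow hb h hp0
      have h2 : b ^ (2 - p) ≤ a ^ (2 - p) := Real.rpow_le_rpow hb h h2p
      nlinarith
  constructor
  · nlinarith [key, ha2, hb2]
  · nlinarith [hQ, ha2, hb2]
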